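/- The following hold: (i) for every (t,x) ∈ [0,T]×ℝ, u(t,x) < α₀ if and only if x < b(t) (as extended reals); (ii) b is non-decreasing on [0,T]; (iii) b is left-continuous on (0,T]: for every t₀ ∈ (0,T] and every sequence tₙ increasing to t₀, b(tₙ) → b(t₀) in the extended reals; (iv) lim_{t↑T} b(t) = +∞. -/

import Mathlib

/-- properties of the action boundary `b(t) = sup{y : u(t,y) < α₀}`
(with `sup ∅ = −∞`): (i) `u(t,x) < α₀ ↔ x < b(t)` (as extended reals);
(ii) `b` non-decreasing; (iii) `b` left-continuous on `(0,T]`; (iv) `b(t) → +∞` as `t ↑ T`. -/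
theorem stmt_2 (T : ℝ) (hT : 0 < T) (α₀ : ℝ) (hα₀ : 0 < α₀)
    (u : ℝ → ℝ → ℝ)
    (hu_cont : ContinuousOn (fun p : ℝ × ℝ => u p.1 p.2) (Set.Icc 0 T ×ˢ Set.univ))
    (hu_le : ∀ t ∈ Set.Icc (0:ℝ) T, ∀ x : ℝ, u t x ≤ α₀)
    (hu_t : ∀ x : ℝ, ∀ s ∈ Set.Icc (0:ℝ) T, ∀ t ∈ Set.Icc (0:ℝ) T, s ≤ t → u t x ≤ u s x)
    (hu_x : ∀ t ∈ Set.Icc (0:ℝ) T, Monotone fun x => u t x)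
    (hu_T : ∀ x : ℝ, u T x = 0)
    (b : ℝ → EReal)
    (hb : ∀ t, b t = sSup ((fun y : ℝ => (y : EReal)) '' {y : ℝ | u t y < α₀})) :
    (∀ t ∈ Set.Icc (0:ℝ) T, ∀ x : ℝ, (u t x < α₀ ↔ (x : EReal) < b t)) ∧
    (∀ s ∈ Set.Icc (0:ℝ) T, ∀ t ∈ Set.Icc (0:ℝ) T, s ≤ t → b s ≤ b t) ∧
    (∀ t₀ ∈ Set.Ioc (0:ℝ) T, ∀ tn : ℕ → ℝ, (∀ n, tn n ∈ Set.Icc (0:ℝ) T) →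
      Monotone tn → (∀ n, tn n < t₀) → Filter.Tendsto tn Filter.atTop (nhds t₀) →
      Filter.Tendsto (fun n => b (tn n)) Filter.atTop (nhds (b t₀))) ∧
    Filter.Tendsto b (nhdsWithin T (Set.Iio T)) (nhds (⊤ : EReal)) := by
  -- continuity of x ↦ u t x for t ∈ [0,T]
  have hcx : ∀ t ∈ Set.Icc (0:ℝ) T, Continuous (fun x => u t x) := by
    intro t ht
    rw [← continuousOn_univ]
    exact hu_cont.comp (Continuous.continuousOn (continuous_const.prodMk continuous_id))
      (fun x _ => ⟨ht, trivial⟩)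
  -- (i)
  have hi : ∀ t ∈ Set.Icc (0:ℝ) T, ∀ x : ℝ, (u t x < α₀ ↔ (x : EReal) < b t) := by
    intro t ht x
    constructor
    · intro hx
      have hopen : IsOpen {y : ℝ | u t y < α₀} := isOpen_lt (hcx t ht) continuous_const
      obtain ⟨ε, hε, hball⟩ := Metric.isOpen_iff.mp hopen x hx
      have hmem : x + ε / 2 ∈ {y : ℝ | u t y < α₀} := by
        apply hball
        rw [Metric.mem_ball, Real.dist_eq, show x + ε/2 - x = ε/2 by ring,
          abs_of_pos (by linarith)]
        linarith
      have hle : ((x + ε/2 : ℝ) : EReal) ≤ b t := by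
        rw [hb t]; exact le_sSup ⟨x + ε/2, hmem, rfl⟩
      refine lt_of_lt_of_le ?_ hle
      exact_mod_cast (by linarith : x < x + ε/2)
    · intro hx
      rw [hb t] at hx
      obtain ⟨_, ⟨y, hy, rfl⟩, hxy⟩ := lt_sSup_iff.mp hx
      have : x ≤ y := le_of_lt (by simpa using hxy)
      exact lt_of_le_of_lt (hu_x t ht this) hy
  -- (ii)
  have hii : ∀ s ∈ Set.Icc (0:ℝ) T, ∀ t ∈ Set.Icc (0:ℝ) T, s ≤ t → b s ≤ b t := by
    intro s hs t ht hst
    rw [hb s, hb t]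
    apply sSup_le_sSup
    apply Set.image_mono
    intro y hy
    exact lt_of_le_of_lt (hu_t y s hs t ht hst) hy
  refine ⟨hi, hii, ?_, ?_⟩
  · -- (iii)
    intro t₀ ht₀ tn htn hmono hlt htend
    have ht₀' : t₀ ∈ Set.Icc (0:ℝ) T := ⟨ht₀.1.le, ht₀.2⟩
    have hbmono : Monotone (fun n => b (tn n)) :=
      fun m n hmn => hii (tn m) (htn m) (tn n) (htn n) (hmono hmn)
    have htend' : Filter.Tendsto (fun n => b (tn n)) Filter.atTop (nhds (⨆ n, b (tn n))) :=
      tendsto_atTop_iSup hbmono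
    have heq : (⨆ n, b (tn n)) = b t₀ := by
      apply le_antisymm
      · exact iSup_le fun n => hii (tn n) (htn n) t₀ ht₀' (hlt n).le
      · rw [hb t₀]
        apply sSup_le
        rintro _ ⟨y, hy, rfl⟩
        -- continuity along the sequence
        have hseq : Filter.Tendsto (fun n => (tn n, y)) Filter.atTop
            (nhdsWithin (t₀, y) (Set.Icc 0 T ×ˢ Set.univ)) := by
          apply tendsto_nhdsWithin_of_tendsto_nhds_of_eventually_within
          · exact htend.prodMk_nhds tendsto_const_nhds
          · exact Filter.Eventually.of_forall fun n => ⟨htn n, trivial⟩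
        have hcont : Filter.Tendsto (fun n => u (tn n) y) Filter.atTop (nhds (u t₀ y)) :=
          (hu_cont (t₀, y) ⟨ht₀', trivial⟩).tendsto.comp hseq
        have : ∀ᶠ n in Filter.atTop, u (tn n) y < α₀ :=
          hcont.eventually_lt_const hy
        obtain ⟨n, hn⟩ := this.exists
        calc ((y:ℝ) : EReal) ≤ b (tn n) := ((hi (tn n) (htn n) y).mp hn).le
          _ ≤ ⨆ n, b (tn n) := le_iSup (fun n => b (tn n)) n
    rwa [heq] at htend'
  · -- (iv)
    rw [EReal.tendsto_nhds_top_iff_real]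
    intro r
    have h1 : ∀ᶠ t in nhdsWithin T (Set.Iio T), (0:ℝ) < t :=
      Filter.Eventually.filter_mono nhdsWithin_le_nhds (eventually_gt_nhds hT)
    have h2 : ∀ᶠ t in nhdsWithin T (Set.Iio T), t < T := eventually_mem_nhdsWithin
    have hTmem : ((T:ℝ), r) ∈ Set.Icc (0:ℝ) T ×ˢ (Set.univ : Set ℝ) :=
      ⟨⟨hT.le, le_refl T⟩, trivial⟩
    have hseq : Filter.Tendsto (fun t => (t, r)) (nhdsWithin T (Set.Iio T))
        (nhdsWithin (T, r) (Set.Icc 0 T ×ˢ Set.univ)) := by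
      apply tendsto_nhdsWithin_of_tendsto_nhds_of_eventually_within
      · exact ((continuous_id.prodMk continuous_const).continuousAt.tendsto).mono_left
          nhdsWithin_le_nhds
      · filter_upwards [h1, h2] with t h1 h2
        exact ⟨⟨h1.le, h2.le⟩, trivial⟩
    have hcont : Filter.Tendsto (fun t => u t r) (nhdsWithin T (Set.Iio T)) (nhds (u T r)) :=
      (hu_cont (T, r) hTmem).tendsto.comp hseq
    rw [hu_T r] at hcont
    have hlt : ∀ᶠ t in nhdsWithin T (Set.Iio T), u t r < α₀ := hcont.eventually_lt_const hα₀
    filter_upwards [h1, h2, hlt] with t h1 h2 hlt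
    exact (hi t ⟨h1.le, h2.le⟩ r).mp hlt
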